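/- For any permutation σ ∈ S_n and any transposition (i,j), the length of the longest alternating subsequence satisfies |LAS(σ) − LAS(σ∘(i,j))| ≤ 6. -/

import Mathlib

open Finset
open scoped Classical

/-- `LAS σ` is the maximal length of an alternating subsequence of `σ`:
indices `i₁ < i₂ < ⋯ < i_k` with `σ(i₁) > σ(i₂) < σ(i₃) > ⋯`. -/
noncomputable def LAS {n : ℕ} (σ : Equiv.Perm (Fin n)) : ℕ :=
  sSup {k | ∃ l : List (Fin n), l.Chain' (· < ·) ∧
    (∀ t : ℕ, ∀ ht : t + 1 < l.length,
      if Even t then σ (l[t+1]'ht) < σ (l[t]'(Nat.lt_of_succ_lt ht))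
      else σ (l[t]'(Nat.lt_of_succ_lt ht)) < σ (l[t+1]'ht)) ∧
    l.length = k}

namespace LASAux

open List

variable {α : Type*} [LinearOrder α]

/-- step relation: `R b x y` means the step from `x` to `y` conforms to
orientation `b` (`true` = descending step). -/
def R (b : Bool) (x y : α) : Prop := if b then y < x else x < y

/-- zigzag predicate with orientation `b` (`true`: first step is a descent). -/
def zig : Bool → List α → Prop
  | _, [] => True
  | _, [_] => True
  | b, x :: y :: r => R b x y ∧ zig (!b) (y :: r)

lemma zig_nil (b : Bool) : zig b ([] : List α) := trivial

lemma zig_single (b : Bool) (x : α) : zig b [x] := trivial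

lemma zig_cons_cons {b : Bool} {x y : α} {r : List α} :
    zig b (x :: y :: r) ↔ R b x y ∧ zig (!b) (y :: r) := Iff.rfl

lemma R_total {b : Bool} {x y : α} (h : x ≠ y) : R b x y ∨ R (!b) x y := by
  cases b
  · exact lt_or_gt_of_ne h
  · exact (lt_or_gt_of_ne h).symm

lemma R_trans {b : Bool} {x y z : α} (h1 : R b x y) (h2 : R b y z) : R b x z := by
  cases b
  · exact lt_trans h1 h2
  · exact lt_trans h2 h1

lemma R_attach {b : Bool} {a c h : α} (h1 : R b a c)
    (h2 : if !b then c ≤ h else h ≤ c) : R b a h := by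
  cases b
  · exact lt_of_lt_of_le h1 h2
  · exact lt_of_le_of_lt h2 h1

/-- Key removal lemma: from a zigzag list, one can delete a designated
element and at most one more, keeping a zigzag of the same orientation whose
head did not move "backwards". -/
lemma zig_removeAux : ∀ (w₁ : List α) (b : Bool) (x : α) (w₂ : List α),
    zig b (w₁ ++ x :: w₂) → (w₁ ++ x :: w₂).Nodup →
    ∃ u, u <+ w₁ ++ w₂ ∧ zig b u ∧ w₁.length + w₂.length ≤ u.length + 1 ∧
      ∀ g h, w₁.head? = some g → u.head? = some h →
        (if b then g ≤ h else h ≤ g) := by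
  intro w₁
  induction w₁ with
  | nil =>
    intro b x w₂ hz _
    match w₂, hz with
    | [], _ => exact ⟨[], by simp, zig_nil b, by simp, by simp⟩
    | [y], _ => exact ⟨[y], by simp, zig_single b y, by simp, by simp⟩
    | y :: z :: r, hz =>
      obtain ⟨_, _, hz2⟩ : R b x y ∧ R (!b) y z ∧ zig (!(!b)) (z :: r) := by
        simpa [zig_cons_cons] using hz
      rw [Bool.not_not] at hz2
      refine ⟨z :: r, ?_, hz2, by simp, by simp⟩
      simpa using (sublist_cons_self y (z :: r))
  | cons a v ih =>
    intro b x w₂ hz hnd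
    match v with
    | [] =>
      -- list is a :: x :: w₂
      simp only [List.cons_append, List.nil_append] at hz hnd
      match w₂, hz with
      | [], _ =>
        refine ⟨[a], by simp, zig_single b a, by simp, ?_⟩
        intro g h hg hh
        simp only [head?_cons, Option.some.injEq] at hg hh
        subst hg; subst hh; split <;> exact le_refl _
      | y :: r, hz =>
        obtain ⟨h1, h2, hz2⟩ : R b a x ∧ R (!b) x y ∧ zig (!(!b)) (y :: r) := by
          simpa [zig_cons_cons] using hz
        rw [Bool.not_not] at hz2
        have hay : a ≠ y := fun h => (List.nodup_cons.mp hnd).1 (by simp [h])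
        rcases R_total (b := b) hay with hR | hR
        · -- keep a, drop y : u = a :: r
          refine ⟨a :: r, ?_, ?_, by simp only [List.length_cons, List.length_nil]; omega, ?_⟩
          · exact (sublist_cons_self y r).cons₂ a
          · match r, hz2 with
            | [], _ => exact zig_single b a
            | r₁ :: r', hz2 =>
              obtain ⟨h3, h4⟩ : R b y r₁ ∧ zig (!b) (r₁ :: r') := hz2
              exact zig_cons_cons.mpr ⟨R_trans hR h3, h4⟩
          · intro g h hg hh
            simp only [head?_cons, Option.some.injEq] at hg hh
            subst hg; subst hh; split <;> exact le_refl _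
        · -- drop a : u = y :: r
          refine ⟨y :: r, ?_, hz2, by simp only [List.length_cons, List.length_nil]; omega, ?_⟩
          · exact (y :: r).sublist_cons_self a
          · intro g h hg hh
            simp only [head?_cons, Option.some.injEq] at hg hh
            subst hg; subst hh
            revert hR; cases b <;> simp [R] <;> exact le_of_lt
    | c :: v' =>
      -- list is a :: (c :: v') ++ x :: w₂
      have hz' : R b a c ∧ zig (!b) ((c :: v') ++ x :: w₂) := by
        simpa [zig_cons_cons] using hz
      have hnd' : ((c :: v') ++ x :: w₂).Nodup := by
        simp only [List.cons_append, nodup_cons] at hnd ⊢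
        exact ⟨hnd.2.1, hnd.2.2⟩
      obtain ⟨u, hsub, hzu, hlen, hhead⟩ := ih (!b) x w₂ hz'.2 hnd'
      refine ⟨a :: u, ?_, ?_, by simp at hlen ⊢; omega, ?_⟩
      · simpa using hsub.cons₂ a
      · match u, hzu with
        | [], _ => exact zig_single b a
        | h :: u', hzu =>
          have hh := hhead c h rfl rfl
          exact zig_cons_cons.mpr ⟨R_attach hz'.1 hh, hzu⟩
      · intro g h hg hh
        simp only [head?_cons, Option.some.injEq] at hg hh
        subst hg; subst hh; split <;> exact le_refl _

lemma parity_flip (s : ℕ) (b : Bool) :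
    ((Even (s+1) ↔ b = true)) ↔ ((Even s ↔ (!b) = true)) := by
  cases b <;> simp [Nat.even_add_one]

lemma zig_iff (w : List α) : ∀ (b : Bool), zig b w ↔
    ∀ (t : ℕ) (ht : t + 1 < w.length),
      if Even t ↔ b = true then w[t+1]'ht < w[t]'(Nat.lt_of_succ_lt ht)
      else w[t]'(Nat.lt_of_succ_lt ht) < w[t+1]'ht := by
  induction w with
  | nil => intro b; constructor <;> intro _ <;> [(intro t ht; simp at ht); exact zig_nil b]
  | cons x w ih =>
    intro b
    match w with
    | [] =>
      constructor <;> intro _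
      · intro t ht; simp at ht
      · exact zig_single b x
    | y :: r =>
      rw [zig_cons_cons, ih (!b)]
      constructor
      · rintro ⟨h1, h2⟩ t ht
        match t with
        | 0 =>
          revert h1; cases b <;> simp [R]
        | (s+1) =>
          have hs : s + 1 < (y :: r).length := by
            simpa using Nat.lt_of_succ_lt_succ ht
          have := h2 s hs
          simp only [List.getElem_cons_succ]
          simp only [parity_flip]
          exact this
      · intro h
        constructor
        · have := h 0 (by simp)
          revert this; cases b <;> simp [R]
        · intro s hs
          have := h (s+1) (by simpa using Nat.succ_lt_succ hs)
          simp only [parity_flip, List.getElem_cons_succ] at this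
          exact this

lemma remove_one {n : ℕ} (σ : Equiv.Perm (Fin n)) (l : List (Fin n)) (a : Fin n)
    (hc : l.Chain' (· < ·)) (hz : zig true (l.map σ)) :
    ∃ l', l' <+ l ∧ a ∉ l' ∧ zig true (l'.map σ) ∧ l.length ≤ l'.length + 2 := by
  by_cases ha : a ∈ l
  · obtain ⟨l₁, l₂, rfl⟩ := List.append_of_mem ha
    have hnd : (l₁ ++ a :: l₂).Nodup := by
      have hp : (l₁ ++ a :: l₂).Pairwise (· < ·) := List.isChain_iff_pairwise.mp hc
      exact hp.imp ne_of_lt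
    have hndm : ((l₁ ++ a :: l₂).map σ).Nodup := hnd.map σ.injective
    have hzm : zig true (l₁.map σ ++ σ a :: l₂.map σ) := by simpa using hz
    have hndm' : (l₁.map σ ++ σ a :: l₂.map σ).Nodup := by simpa using hndm
    obtain ⟨u, hsub, hzu, hlen, -⟩ := zig_removeAux (l₁.map σ) true (σ a) (l₂.map σ) hzm hndm'
    have hsub' : u <+ (l₁ ++ l₂).map σ := by simpa using hsub
    obtain ⟨l', hl', rfl⟩ := List.sublist_map_iff.mp hsub'
    refine ⟨l', ?_, ?_, hzu, ?_⟩
    · exact hl'.trans (((l₂.sublist_cons_self a).append_left l₁))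
    · intro hmem
      have : a ∈ l₁ ++ l₂ := hl'.subset hmem
      rcases List.mem_append.mp this with h' | h'
      · exact (List.nodup_append'.mp hnd).2.2 h' (by simp)
      · exact (List.nodup_cons.mp (List.nodup_append.mp hnd).2.1).1 h'
    · have := hlen
      simp only [List.length_map, List.length_append, List.length_cons] at this ⊢
      omega
  · exact ⟨l, List.Sublist.refl l, ha, hz, by omega⟩

lemma LAS_bddAbove {n : ℕ} (σ : Equiv.Perm (Fin n)) :
    BddAbove {k | ∃ l : List (Fin n), l.Chain' (· < ·) ∧
    (∀ t : ℕ, ∀ ht : t + 1 < l.length,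
      if Even t then σ (l[t+1]'ht) < σ (l[t]'(Nat.lt_of_succ_lt ht))
      else σ (l[t]'(Nat.lt_of_succ_lt ht)) < σ (l[t+1]'ht)) ∧
    l.length = k} := by
  refine ⟨n, fun k hk => ?_⟩
  obtain ⟨l, hc, -, rfl⟩ := hk
  have hnd : l.Nodup := (List.isChain_iff_pairwise.mp hc).imp ne_of_lt
  simpa using hnd.length_le_card

lemma cond_iff_zig {n : ℕ} (σ : Equiv.Perm (Fin n)) (l : List (Fin n)) :
    (∀ t : ℕ, ∀ ht : t + 1 < l.length,
      if Even t then σ (l[t+1]'ht) < σ (l[t]'(Nat.lt_of_succ_lt ht))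
      else σ (l[t]'(Nat.lt_of_succ_lt ht)) < σ (l[t+1]'ht))
    ↔ zig true (l.map σ) := by
  rw [zig_iff]
  constructor <;> intro h t ht
  · have ht' : t + 1 < l.length := by simpa using ht
    have := h t ht'
    simpa using this
  · have ht' : t + 1 < (l.map σ).length := by simpa using ht
    have := h t ht'
    simpa using this

lemma le_LAS {n : ℕ} (σ : Equiv.Perm (Fin n)) (l : List (Fin n))
    (hc : l.Chain' (· < ·)) (hz : zig true (l.map σ)) : l.length ≤ LAS σ :=
  le_csSup (LAS_bddAbove σ) ⟨l, hc, (cond_iff_zig σ l).mpr hz, rfl⟩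

lemma LAS_witness {n : ℕ} (σ : Equiv.Perm (Fin n)) :
    ∃ l : List (Fin n), l.Chain' (· < ·) ∧ zig true (l.map σ) ∧ l.length = LAS σ := by
  have hne : {k | ∃ l : List (Fin n), l.Chain' (· < ·) ∧
    (∀ t : ℕ, ∀ ht : t + 1 < l.length,
      if Even t then σ (l[t+1]'ht) < σ (l[t]'(Nat.lt_of_succ_lt ht))
      else σ (l[t]'(Nat.lt_of_succ_lt ht)) < σ (l[t+1]'ht)) ∧
    l.length = k}.Nonempty := by
    refine ⟨0, [], List.isChain_nil, ?_, rfl⟩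
    intro t ht; simp at ht
  have := Nat.sSup_mem hne (LAS_bddAbove σ)
  obtain ⟨l, hc, hcond, hlen⟩ := this
  exact ⟨l, hc, (cond_iff_zig σ l).mp hcond, hlen⟩

lemma LAS_le_of_eq_off {n : ℕ} (σ τ : Equiv.Perm (Fin n)) (i j : Fin n)
    (h : ∀ x : Fin n, x ≠ i → x ≠ j → σ x = τ x) : LAS σ ≤ LAS τ + 4 := by
  obtain ⟨l, hc, hz, hlen⟩ := LAS_witness σ
  obtain ⟨l₁, hsub₁, hi₁, hz₁, hlen₁⟩ := remove_one σ l i hc hz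
  obtain ⟨l₂, hsub₂, hj₂, hz₂, hlen₂⟩ :=
    remove_one σ l₁ j (hc.sublist hsub₁) hz₁
  have hi₂ : i ∉ l₂ := fun hm => hi₁ (hsub₂.subset hm)
  have hmapeq : l₂.map τ = l₂.map σ := by
    apply List.map_congr_left
    intro x hx
    exact (h x (fun e => hi₂ (e ▸ hx)) (fun e => hj₂ (e ▸ hx))).symm
  have hzτ : zig true (l₂.map τ) := by rw [hmapeq]; exact hz₂
  have := le_LAS τ l₂ (hc.sublist (hsub₂.trans hsub₁)) hzτ
  omega

end LASAux

/-- Right-composition with a transposition changes the LAS by at most 6. -/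
theorem las_mul_swap_diff_le_six {n : ℕ} (σ : Equiv.Perm (Fin n)) (i j : Fin n)
    (hij : i ≠ j) :
    |(LAS σ : ℤ) - (LAS (σ * Equiv.swap i j) : ℤ)| ≤ 6 := by
  set τ := σ * Equiv.swap i j with hτ
  have heq : ∀ x : Fin n, x ≠ i → x ≠ j → σ x = τ x := by
    intro x hxi hxj
    simp [hτ, Equiv.Perm.mul_apply, Equiv.swap_apply_of_ne_of_ne hxi hxj]
  have h1 : LAS σ ≤ LAS τ + 4 := LASAux.LAS_le_of_eq_off σ τ i j heq
  have h2 : LAS τ ≤ LAS σ + 4 :=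
    LASAux.LAS_le_of_eq_off τ σ i j (fun x hxi hxj => (heq x hxi hxj).symm)
  rw [abs_le]
  constructor <;> omega
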